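/- Let A ≥ 0 and Z > 0 with extremal eigenvalues a ≥ b > 0. Then for every k, (2√(ab)/(a+b))·λ_k(AZ) ≤ μ_k(AZ) ≤ ((a+b)/(2√(ab)))·λ_k(AZ), where μ_k denotes the k-th largest singular value and λ_k the k-th largest eigenvalue of AZ. -/

import Mathlib

open Matrix ComplexOrder Polynomial


theorem my_charpoly_conj {n : ℕ} (M P Q : Matrix (Fin n) (Fin n) ℂ)
    (h : P * Q = 1) : (P * M * Q).charpoly = M.charpoly := by
  have h' : Q * P = 1 := mul_eq_one_comm.mp h
  unfold Matrix.charpoly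
  have hmap : ∀ X Y : Matrix (Fin n) (Fin n) ℂ,
      (C : ℂ →+* ℂ[X]).mapMatrix (X * Y) =
        (C : ℂ →+* ℂ[X]).mapMatrix X * (C : ℂ →+* ℂ[X]).mapMatrix Y :=
    fun X Y => _root_.map_mul (C : ℂ →+* ℂ[X]).mapMatrix X Y
  have hc : charmatrix (P * M * Q) =
      (C : ℂ →+* ℂ[X]).mapMatrix P * charmatrix M * (C : ℂ →+* ℂ[X]).mapMatrix Q := by
    unfold charmatrix
    rw [mul_sub, sub_mul]
    congr 1
    · rw [mul_assoc, (Matrix.scalar_commute (X : ℂ[X]) (fun r => Commute.all _ _) _).eq,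
        ← mul_assoc, ← hmap, h]
      simp
    · rw [← hmap, ← hmap]
  rw [hc, det_mul, det_mul, mul_comm, ← mul_assoc, ← det_mul, ← hmap, h']
  simp


-- roots of charpoly of a Hermitian matrix = its eigenvalues
theorem my_charpoly_diag {n : ℕ} (d : Fin n → ℂ) :
    (Matrix.diagonal d).charpoly.roots = Multiset.map d Finset.univ.val := by
  have h1 : (Matrix.diagonal d).charpoly = ∏ i : Fin n, (X - C (d i)) := by
    unfold Matrix.charpoly
    have : charmatrix (Matrix.diagonal d) = Matrix.diagonal (fun i => (X : ℂ[X]) - C (d i)) := by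
      ext i j
      by_cases hij : i = j
      · subst hij; simp [charmatrix_apply_eq]
      · simp [charmatrix_apply_ne _ _ _ hij, Matrix.diagonal_apply_ne _ hij]
    rw [this, Matrix.det_diagonal]
  rw [h1]
  have : ∏ i : Fin n, (X - C (d i)) =
      ((Multiset.map d Finset.univ.val).map fun a => X - C a).prod := by
    rw [Multiset.map_map]; rfl
  rw [this, Polynomial.roots_multiset_prod_X_sub_C]

-- roots of charpoly of Hermitian matrix
theorem my_herm_roots {n : ℕ} {H : Matrix (Fin n) (Fin n) ℂ} (hH : H.IsHermitian) :
    H.charpoly.roots = Multiset.map (fun i => (hH.eigenvalues i : ℂ)) Finset.univ.val := by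
  have hs := hH.spectral_theorem
  have hu : (hH.eigenvectorUnitary : Matrix (Fin n) (Fin n) ℂ) *
      (star hH.eigenvectorUnitary : Matrix (Fin n) (Fin n) ℂ) = 1 := by
    exact Matrix.mem_unitaryGroup_iff.mp hH.eigenvectorUnitary.2
  calc H.charpoly.roots
      = ((hH.eigenvectorUnitary : Matrix (Fin n) (Fin n) ℂ) *
          Matrix.diagonal (RCLike.ofReal ∘ hH.eigenvalues) *
          (star hH.eigenvectorUnitary : Matrix (Fin n) (Fin n) ℂ)).charpoly.roots := by
            exact congrArg (fun M : Matrix (Fin n) (Fin n) ℂ => M.charpoly.roots) hs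
    _ = (Matrix.diagonal (RCLike.ofReal ∘ hH.eigenvalues)).charpoly.roots := by
          rw [my_charpoly_conj _ _ _ hu]
    _ = _ := by rw [my_charpoly_diag]; rfl


-- monotone tuples with equal multisets are equal
theorem my_mono_unique {n : ℕ} {f g : Fin n → ℝ} (hf : Monotone f) (hg : Monotone g)
    (h : Multiset.map f Finset.univ.val = Multiset.map g Finset.univ.val) : f = g := by
  have hof : ∀ h : Fin n → ℝ, Multiset.map h Finset.univ.val = ↑(List.ofFn h) := by
    intro h
    rw [List.ofFn_eq_map]
    rfl
  rw [hof f, hof g] at h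
  have hperm : (List.ofFn f).Perm (List.ofFn g) := Quotient.exact h
  have hsf : (List.ofFn f).Pairwise (· ≤ ·) := by
    rw [List.pairwise_ofFn]
    exact fun i j hij => hf hij.le
  have hsg : (List.ofFn g).Pairwise (· ≤ ·) := by
    rw [List.pairwise_ofFn]
    exact fun i j hij => hg hij.le
  have := List.Perm.eq_of_pairwise' hsf hsg hperm
  exact List.ofFn_injective this

theorem my_exists_perm {n : ℕ} (f g : Fin n → ℝ)
    (h : Multiset.map f Finset.univ.val = Multiset.map g Finset.univ.val) :
    ∃ σ : Equiv.Perm (Fin n), f = g ∘ σ := by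
  have key : ∀ (h : Fin n → ℝ) (σ : Equiv.Perm (Fin n)),
      Multiset.map (h ∘ σ) Finset.univ.val = Multiset.map h Finset.univ.val := by
    intro h σ
    have : Multiset.map (⇑σ) Finset.univ.val = Finset.univ.val := by
      have := Finset.map_univ_equiv σ
      calc Multiset.map (⇑σ) Finset.univ.val
          = (Finset.univ.map σ.toEmbedding).val := by rw [Finset.map_val]; rfl
        _ = Finset.univ.val := by rw [Finset.map_univ_equiv]
    calc Multiset.map (h ∘ σ) Finset.univ.val
        = Multiset.map h (Multiset.map (⇑σ) Finset.univ.val) := by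
          rw [Multiset.map_map]
      _ = _ := by rw [this]

  set σf := Tuple.sort f
  set σg := Tuple.sort g
  have heq : f ∘ σf = g ∘ σg := by
    apply my_mono_unique (Tuple.monotone_sort f) (Tuple.monotone_sort g)
    rw [key f σf, key g σg, h]
  refine ⟨σf.symm.trans σg, ?_⟩
  funext i
  have := congrFun heq (σf.symm i)
  simpa using this


variable {n : ℕ}

/-- conjugated real diagonal matrix -/
noncomputable def cdiag (U : Matrix.unitaryGroup (Fin n) ℂ) (f : Fin n → ℝ) :
    Matrix (Fin n) (Fin n) ℂ :=
  (U : Matrix (Fin n) (Fin n) ℂ) * Matrix.diagonal (fun i => (f i : ℂ)) *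
    (star U : Matrix (Fin n) (Fin n) ℂ)

theorem cdiag_herm (U : Matrix.unitaryGroup (Fin n) ℂ) (f : Fin n → ℝ) :
    (cdiag U f).IsHermitian := by
  unfold cdiag Matrix.IsHermitian
  rw [conjTranspose_mul, conjTranspose_mul, diagonal_conjTranspose]
  have : star (fun i => (f i : ℂ)) = fun i => (f i : ℂ) := by
    funext i; simp [Pi.star_apply, Complex.conj_ofReal]
  rw [this]
  simp [Matrix.star_eq_conjTranspose, mul_assoc]

theorem cdiag_mul (U : Matrix.unitaryGroup (Fin n) ℂ) (f g : Fin n → ℝ) :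
    cdiag U f * cdiag U g = cdiag U (f * g) := by
  unfold cdiag
  have h1 : (star U : Matrix (Fin n) (Fin n) ℂ) * (U : Matrix (Fin n) (Fin n) ℂ) = 1 :=
    Matrix.mem_unitaryGroup_iff'.mp U.2
  calc (U : Matrix (Fin n) (Fin n) ℂ) * Matrix.diagonal (fun i => (f i : ℂ)) *
        (star U : Matrix (Fin n) (Fin n) ℂ) *
        ((U : Matrix (Fin n) (Fin n) ℂ) * Matrix.diagonal (fun i => (g i : ℂ)) *
        (star U : Matrix (Fin n) (Fin n) ℂ))
      = (U : Matrix (Fin n) (Fin n) ℂ) * (Matrix.diagonal (fun i => (f i : ℂ)) *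
        ((star U : Matrix (Fin n) (Fin n) ℂ) * (U : Matrix (Fin n) (Fin n) ℂ)) *
        Matrix.diagonal (fun i => (g i : ℂ))) * (star U : Matrix (Fin n) (Fin n) ℂ) := by
        simp only [mul_assoc]
    _ = _ := by
        rw [h1, mul_one, diagonal_mul_diagonal]
        congr 2
        funext i
        simp [Pi.mul_apply]

theorem cdiag_one (U : Matrix.unitaryGroup (Fin n) ℂ) : cdiag U 1 = 1 := by
  unfold cdiag
  have : Matrix.diagonal (fun i : Fin n => ((1 : ℝ) : ℂ)) = 1 := by
    simp [Matrix.diagonal_one]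
  rw [show (fun i : Fin n => (((1 : Fin n → ℝ) i : ℝ) : ℂ)) = fun i => ((1:ℝ) : ℂ) from rfl, this,
    mul_one]
  exact Matrix.mem_unitaryGroup_iff.mp U.2

theorem cdiag_smul (U : Matrix.unitaryGroup (Fin n) ℂ) (r : ℝ) (f : Fin n → ℝ) :
    r • cdiag U f = cdiag U (r • f) := by
  unfold cdiag
  rw [← smul_mul_assoc, ← mul_smul_comm]
  congr 2
  ext i j
  by_cases h : i = j <;>
    simp [Matrix.diagonal_apply, h, Complex.real_smul]

theorem cdiag_add (U : Matrix.unitaryGroup (Fin n) ℂ) (f g : Fin n → ℝ) :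
    cdiag U f + cdiag U g = cdiag U (f + g) := by
  unfold cdiag
  rw [← add_mul, ← mul_add, Matrix.diagonal_add]
  congr 2
  funext i
  simp

theorem cdiag_psd (U : Matrix.unitaryGroup (Fin n) ℂ) (f : Fin n → ℝ) (hf : ∀ i, 0 ≤ f i) :
    (cdiag U f).PosSemidef := by
  unfold cdiag
  have hd : (Matrix.diagonal (fun i => (f i : ℂ))).PosSemidef := by
    refine Matrix.posSemidef_diagonal_iff.mpr fun i => ?_
    exact_mod_cast Complex.zero_le_real.mpr (hf i)
  simpa [Matrix.star_eq_conjTranspose] using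
    hd.mul_mul_conjTranspose_same (U : Matrix (Fin n) (Fin n) ℂ)

theorem cdiag_sub (U : Matrix.unitaryGroup (Fin n) ℂ) (f g : Fin n → ℝ) :
    cdiag U f - cdiag U g = cdiag U (f - g) := by
  have := cdiag_add U (f - g) g
  rw [sub_add_cancel] at this
  rw [← this]
  abel

theorem psd_smul {M : Matrix (Fin n) (Fin n) ℂ} (hM : M.PosSemidef) {r : ℝ} (hr : 0 ≤ r) :
    (r • M).PosSemidef := by
  refine .of_dotProduct_mulVec_nonneg ?_ ?_
  · show (r • M)ᴴ = r • M
    rw [show (r • M)ᴴ = r • Mᴴ by simp, hM.1]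
  · intro x
    have h0 := hM.dotProduct_mulVec_nonneg x
    rw [Matrix.smul_mulVec, dotProduct_smul]
    positivity

theorem my_KL (U : Matrix.unitaryGroup (Fin n) ℂ) (y : Fin n → ℝ) {α β K : ℝ}
    (hβ : 0 < β) (hy : ∀ i, β ≤ y i ∧ y i ≤ α)
    (hK : K = (α + β) / (2 * Real.sqrt (α * β)))
    (C : Matrix (Fin n) (Fin n) ℂ) (hC : C.IsHermitian) (hC2 : (C - C * C).PosSemidef) :
    ((K ^ 2 : ℝ) • cdiag U y - C * cdiag U y * C).PosSemidef := by
  classical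
  rcases Nat.eq_zero_or_pos n with hn | hn
  · refine .of_dotProduct_mulVec_nonneg ?_ ?_
    · show _ = _
      apply Matrix.ext; intro i j; exact absurd i.2 (by omega)
    · intro x
      have hz : star x ⬝ᵥ ((((K ^ 2 : ℝ) • cdiag U y - C * cdiag U y * C)) *ᵥ x) = 0 := by
        unfold dotProduct
        apply Finset.sum_eq_zero; intro i _; exact absurd i.2 (by omega)
      rw [hz]
  have hα : 0 < α := lt_of_lt_of_le hβ ((hy ⟨0, hn⟩).1.trans (hy ⟨0, hn⟩).2)
  set κ := Real.sqrt (α * β) with hκdef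
  have hκpos : 0 < κ := Real.sqrt_pos.mpr (by positivity)
  have hκsq : κ ^ 2 = α * β := Real.sq_sqrt (by positivity)
  have hypos : ∀ i, 0 < y i := fun i => lt_of_lt_of_le hβ (hy i).1
  set Y := cdiag U y with hY
  set Yi := cdiag U (fun i => (y i)⁻¹) with hYi
  set W := cdiag U (fun i => Real.sqrt (y i)) with hW
  set V := cdiag U (fun i => (Real.sqrt (y i))⁻¹) with hV
  have hWV : W * V = 1 := by
    rw [hW, hV, cdiag_mul,
      show ((fun i => Real.sqrt (y i)) * fun i => (Real.sqrt (y i))⁻¹) = 1 from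
        funext fun i => by
          simp [Pi.mul_apply, mul_inv_cancel₀ (ne_of_gt (Real.sqrt_pos.mpr (hypos i)))]]
    exact cdiag_one U
  have hVW : V * W = 1 := by
    rw [hV, hW, cdiag_mul,
      show ((fun i => (Real.sqrt (y i))⁻¹) * fun i => Real.sqrt (y i)) = 1 from
        funext fun i => by
          simp [Pi.mul_apply, inv_mul_cancel₀ (ne_of_gt (Real.sqrt_pos.mpr (hypos i)))]]
    exact cdiag_one U
  have hWW : W * W = Y := by
    rw [hW, hY, cdiag_mul,
      show ((fun i => Real.sqrt (y i)) * fun i => Real.sqrt (y i)) = y from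
        funext fun i => Real.mul_self_sqrt (hypos i).le]
  have hVV : V * V = Yi := by
    rw [hV, hYi, cdiag_mul,
      show ((fun i => (Real.sqrt (y i))⁻¹) * fun i => (Real.sqrt (y i))⁻¹)
          = fun i => (y i)⁻¹ from
        funext fun i => by rw [Pi.mul_apply, ← mul_inv, Real.mul_self_sqrt (hypos i).le]]
  set R := K • W - κ • (V * C) with hR
  have psd1 : (Rᴴ * R).PosSemidef := Matrix.posSemidef_conjTranspose_mul_self R
  have hRH : Rᴴ = K • W - κ • (C * V) := by
    rw [hR, conjTranspose_sub, show (K • W)ᴴ = K • Wᴴ by simp,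
      show (κ • (V * C))ᴴ = κ • (V * C)ᴴ by simp,
      conjTranspose_mul, (cdiag_herm U _ : Wᴴ = W), (cdiag_herm U _ : Vᴴ = V), hC.eq]
  have h2K : K * κ = (α + β) / 2 := by
    rw [hK]; field_simp
  have hWVC : W * (V * C) = C := by rw [← mul_assoc, hWV, one_mul]
  have hCVW : C * (V * W) = C := by rw [hVW, mul_one]
  have hCVVC : C * (V * (V * C)) = C * (Yi * C) := by
    rw [← mul_assoc V V C, hVV]
  have hRexp : Rᴴ * R = (K ^ 2 : ℝ) • Y - (α + β) • C + (α * β) • (C * (Yi * C)) := by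
    rw [hRH, hR]
    simp only [sub_mul, mul_sub, smul_sub, smul_mul_assoc, mul_smul_comm, smul_smul,
      mul_assoc]
    rw [hWW, hWVC, hCVW, hCVVC]
    rw [show K * K = (K : ℝ)^2 by ring, show K * κ = (α+β)/2 from h2K,
      show κ * K = (α+β)/2 by rw [mul_comm]; exact h2K,
      show κ * κ = α * β by rw [← hκsq]; ring]
    module
  set φ : Fin n → ℝ := fun i => (α + β) - (α * β) * (y i)⁻¹ - y i with hφ
  have hφnn : ∀ i, 0 ≤ φ i := by
    intro i
    have ht := hypos i
    have h2 : (α * β) * (y i)⁻¹ + y i ≤ α + β := by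
      have h3 : α * β + y i * y i ≤ (α + β) * y i := by nlinarith [(hy i).1, (hy i).2]
      calc (α * β) * (y i)⁻¹ + y i = (α * β + y i * y i) * (y i)⁻¹ := by field_simp
        _ ≤ ((α + β) * y i) * (y i)⁻¹ :=
            mul_le_mul_of_nonneg_right h3 (inv_nonneg.mpr ht.le)
        _ = α + β := by field_simp
    show 0 ≤ (α + β) - (α * β) * (y i)⁻¹ - y i
    linarith
  have hφeq : cdiag U φ = (α + β) • (1 : Matrix (Fin n) (Fin n) ℂ) - (α * β) • Yi - Y := by
    have h1 : (α + β) • (1 : Matrix (Fin n) (Fin n) ℂ)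
        = cdiag U ((α + β) • (1 : Fin n → ℝ)) := by rw [← cdiag_one U, cdiag_smul]
    have h2 : (α * β) • Yi = cdiag U ((α * β) • fun i => (y i)⁻¹) := by
      rw [hYi, cdiag_smul]
    rw [h1, h2, hY, cdiag_sub, cdiag_sub]
    have hfe : φ = (((α + β) • (1 : Fin n → ℝ) - (α * β) • fun i => (y i)⁻¹) - y) := by
      funext i
      show φ i = (α + β) * 1 - (α * β) * (y i)⁻¹ - y i
      rw [hφ]; ring
    rw [hfe]
  have psd2 : (C * cdiag U φ * C).PosSemidef := by
    have h := (cdiag_psd U φ hφnn).conjTranspose_mul_mul_same C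
    rwa [hC.eq] at h
  have hexp2 : C * cdiag U φ * C =
      (α + β) • (C * C) - (α * β) • (C * (Yi * C)) - C * (Y * C) := by
    rw [hφeq]
    simp only [mul_sub, sub_mul, mul_smul_comm, smul_mul_assoc, mul_one, one_mul, mul_assoc]
    try module
  have psd3 : ((α + β) • (C - C * C)).PosSemidef := psd_smul hC2 (by positivity)
  have key : (K ^ 2 : ℝ) • Y - C * Y * C =
      Rᴴ * R + C * cdiag U φ * C + (α + β) • (C - C * C) := by
    rw [hRexp, hexp2, smul_sub, mul_assoc]
    module
  rw [key]
  exact (psd1.add psd2).add psd3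

variable {n : ℕ}

-- H1 generalized: star (M *ᵥ a) ⬝ᵥ (N *ᵥ (M *ᵥ b)) with M Hermitian
theorem quad_conj {M N : Matrix (Fin n) (Fin n) ℂ} (hM : M.IsHermitian)
    (v : Fin n → ℂ) :
    star (M *ᵥ v) ⬝ᵥ (N *ᵥ (M *ᵥ v)) = star v ⬝ᵥ ((M * N * M) *ᵥ v) := by
  rw [star_mulVec, ← Matrix.dotProduct_mulVec, hM.eq, Matrix.mulVec_mulVec,
    Matrix.mulVec_mulVec, mul_assoc]

-- H2': star (M *ᵥ a) ⬝ᵥ (M *ᵥ b) = star a ⬝ᵥ ((Mᴴ * M) *ᵥ b)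
theorem dot_mulVec_mulVec (M : Matrix (Fin n) (Fin n) ℂ) (v w : Fin n → ℂ) :
    star (M *ᵥ v) ⬝ᵥ (M *ᵥ w) = star v ⬝ᵥ ((Mᴴ * M) *ᵥ w) := by
  rw [star_mulVec, ← Matrix.dotProduct_mulVec, Matrix.mulVec_mulVec]

-- H3
theorem psd_le {M N : Matrix (Fin n) (Fin n) ℂ} (h : (N - M).PosSemidef) (x : Fin n → ℂ) :
    star x ⬝ᵥ (M *ᵥ x) ≤ star x ⬝ᵥ (N *ᵥ x) := by
  have h0 := h.dotProduct_mulVec_nonneg x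
  rw [Matrix.sub_mulVec, dotProduct_sub] at h0
  exact sub_nonneg.mp h0

-- H4
theorem quad_smul (r : ℝ) (M : Matrix (Fin n) (Fin n) ℂ) (x : Fin n → ℂ) :
    star x ⬝ᵥ ((r • M) *ᵥ x) = (r : ℂ) * (star x ⬝ᵥ (M *ᵥ x)) := by
  rw [Matrix.smul_mulVec, dotProduct_smul]
  simp [Complex.real_smul]

-- H5
theorem quad_diag (d : Fin n → ℝ) (c : Fin n → ℂ) :
    star c ⬝ᵥ ((Matrix.diagonal (fun i => (d i : ℂ))) *ᵥ c)
      = ((∑ p, d p * Complex.normSq (c p) : ℝ) : ℂ) := by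
  unfold dotProduct
  push_cast
  apply Finset.sum_congr rfl
  intro p _
  rw [Matrix.mulVec_diagonal]
  simp only [Pi.star_apply]
  rw [show star (c p) * ((d p : ℂ) * c p) = (d p : ℂ) * (c p * star (c p)) by ring,
    Complex.star_def, Complex.mul_conj]

theorem dot_star_self (c : Fin n → ℂ) :
    star c ⬝ᵥ c = ((∑ p, Complex.normSq (c p) : ℝ) : ℂ) := by
  unfold dotProduct
  push_cast
  apply Finset.sum_congr rfl
  intro p _
  simp only [Pi.star_apply]
  rw [show star (c p) * c p = c p * star (c p) by ring, Complex.star_def, Complex.mul_conj]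

theorem unitary_mul_star_mulVec (U : Matrix.unitaryGroup (Fin n) ℂ) (x : Fin n → ℂ) :
    (U : Matrix (Fin n) (Fin n) ℂ) *ᵥ ((star U : Matrix (Fin n) (Fin n) ℂ) *ᵥ x) = x := by
  rw [Matrix.mulVec_mulVec, Matrix.mem_unitaryGroup_iff.mp U.2, Matrix.one_mulVec]

theorem cdiag_mulVec_eq_smul (U : Matrix.unitaryGroup (Fin n) ℂ) (g : Fin n → ℝ) (lam : ℝ)
    (x : Fin n → ℂ)
    (h : ∀ p, ((star U : Matrix (Fin n) (Fin n) ℂ) *ᵥ x) p ≠ 0 → g p = lam) :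
    (cdiag U g) *ᵥ x = (lam : ℂ) • x := by
  unfold cdiag
  rw [← Matrix.mulVec_mulVec, ← Matrix.mulVec_mulVec]
  have hd : Matrix.diagonal (fun i => (g i : ℂ)) *ᵥ ((star U : Matrix (Fin n) (Fin n) ℂ) *ᵥ x)
      = (lam : ℂ) • ((star U : Matrix (Fin n) (Fin n) ℂ) *ᵥ x) := by
    funext p
    rw [Matrix.mulVec_diagonal, Pi.smul_apply]
    by_cases hp : ((star U : Matrix (Fin n) (Fin n) ℂ) *ᵥ x) p = 0
    · rw [hp]; simp
    · rw [h p hp]; simp [smul_eq_mul]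
  rw [hd, Matrix.mulVec_smul, unitary_mul_star_mulVec]

-- quadform of cdiag on x = U *ᵥ c
theorem quad_cdiag (U : Matrix.unitaryGroup (Fin n) ℂ) (f : Fin n → ℝ) (c : Fin n → ℂ) :
    star ((U : Matrix (Fin n) (Fin n) ℂ) *ᵥ c) ⬝ᵥ
      ((cdiag U f) *ᵥ ((U : Matrix (Fin n) (Fin n) ℂ) *ᵥ c))
      = ((∑ p, f p * Complex.normSq (c p) : ℝ) : ℂ) := by
  unfold cdiag
  rw [← Matrix.mulVec_mulVec, ← Matrix.mulVec_mulVec]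
  have h1 : (star U : Matrix (Fin n) (Fin n) ℂ) *ᵥ
      ((U : Matrix (Fin n) (Fin n) ℂ) *ᵥ c) = c := by
    rw [Matrix.mulVec_mulVec, Matrix.mem_unitaryGroup_iff'.mp U.2, Matrix.one_mulVec]
  rw [h1, dot_mulVec_mulVec]
  have h2 : ((U : Matrix (Fin n) (Fin n) ℂ))ᴴ * (U : Matrix (Fin n) (Fin n) ℂ) = 1 := by
    rw [← Matrix.star_eq_conjTranspose, Matrix.mem_unitaryGroup_iff'.mp U.2]
  rw [h2, Matrix.one_mulVec, quad_diag]

theorem dot_unitary_self (U : Matrix.unitaryGroup (Fin n) ℂ) (c : Fin n → ℂ) :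
    star ((U : Matrix (Fin n) (Fin n) ℂ) *ᵥ c) ⬝ᵥ ((U : Matrix (Fin n) (Fin n) ℂ) *ᵥ c)
      = ((∑ p, Complex.normSq (c p) : ℝ) : ℂ) := by
  rw [dot_mulVec_mulVec]
  have h2 : ((U : Matrix (Fin n) (Fin n) ℂ))ᴴ * (U : Matrix (Fin n) (Fin n) ℂ) = 1 := by
    rw [← Matrix.star_eq_conjTranspose, Matrix.mem_unitaryGroup_iff'.mp U.2]
  rw [h2, Matrix.one_mulVec, dot_star_self]

-- existence of constrained nonzero coefficient vector
theorem exists_coeffs (s t : Finset (Fin n)) (h : t.card < s.card)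
    (φ : Fin n → ((Fin n → ℂ) →ₗ[ℂ] ℂ)) :
    ∃ c : Fin n → ℂ, c ≠ 0 ∧ (∀ p, p ∉ s → c p = 0) ∧ ∀ j ∈ t, φ j c = 0 := by
  classical
  set ext : ({p // p ∈ s} → ℂ) →ₗ[ℂ] (Fin n → ℂ) :=
    LinearMap.pi (fun p : Fin n =>
      if hp : p ∈ s then LinearMap.proj (⟨p, hp⟩ : {p // p ∈ s}) else 0) with hext
  set L : ({p // p ∈ s} → ℂ) →ₗ[ℂ] ({j // j ∈ t} → ℂ) :=
    (LinearMap.pi fun j : {j // j ∈ t} => φ j) ∘ₗ ext with hL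
  have hni : ¬ Function.Injective L := by
    intro hinj
    have hle := LinearMap.finrank_le_finrank_of_injective hinj
    rw [Module.finrank_pi, Module.finrank_pi, Fintype.card_coe, Fintype.card_coe] at hle
    omega
  rw [Function.not_injective_iff] at hni
  obtain ⟨d₁, d₂, hEq, hne⟩ := hni
  set d := d₁ - d₂ with hd
  have hd0 : d ≠ 0 := sub_ne_zero.mpr hne
  have hLd : L d = 0 := by rw [hd, map_sub, hEq, sub_self]
  refine ⟨ext d, ?_, ?_, ?_⟩
  · intro h0
    apply hd0
    funext q
    have := congrFun h0 q.1
    simpa [hext, LinearMap.pi_apply, dif_pos q.2] using this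
  · intro p hp
    simp [hext, LinearMap.pi_apply, dif_neg hp]
  · intro j hj
    have := congrFun (congrArg (fun z => z) hLd) ⟨j, hj⟩
    simpa [hL, LinearMap.pi_apply] using this

theorem quad_smul_vec (r : ℝ) (M : Matrix (Fin n) (Fin n) ℂ) (w : Fin n → ℂ) :
    star ((r : ℂ) • w) ⬝ᵥ (M *ᵥ ((r : ℂ) • w)) = ((r ^ 2 : ℝ) : ℂ) * (star w ⬝ᵥ (M *ᵥ w)) := by
  rw [Matrix.mulVec_smul, star_smul, smul_dotProduct, dotProduct_smul]
  rw [smul_eq_mul, smul_eq_mul, Complex.star_def, Complex.conj_ofReal]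
  push_cast
  ring

set_option maxHeartbeats 2000000 in
theorem singularValue_eigenvalue_kantorovich {n : ℕ} (A Z : Matrix (Fin n) (Fin n) ℂ)
    (hA : A.PosSemidef) (hZ : Z.PosDef) (a b : ℝ)
    (ha : IsGreatest (Set.range hZ.1.eigenvalues) a)
    (hb : IsLeast (Set.range hZ.1.eigenvalues) b)
    (μ lam : Fin n → ℝ) (hμmono : Antitone μ) (hlmono : Antitone lam)
    (hμnn : ∀ i, 0 ≤ μ i)
    -- the `μ i` are the singular values of `A * Z`: their squares are the
    -- eigenvalues (roots of the characteristic polynomial) of `(A*Z)ᴴ * (A*Z)`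
    (hμ : Multiset.map (fun i => ((μ i : ℂ) ^ 2)) Finset.univ.val =
      ((A * Z)ᴴ * (A * Z)).charpoly.roots)
    -- the `lam i` are the eigenvalues of `A * Z`
    (hlam : Multiset.map (fun i => ((lam i : ℂ))) Finset.univ.val =
      (A * Z).charpoly.roots) :
    ∀ k, 2 * Real.sqrt (a * b) / (a + b) * lam k ≤ μ k ∧
      μ k ≤ (a + b) / (2 * Real.sqrt (a * b)) * lam k := by
  classical
  intro k
  have hbpos : 0 < b := by
    obtain ⟨i0, hi0⟩ := hb.1
    rw [← hi0]
    exact hZ.eigenvalues_pos i0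
  have hba : b ≤ a := hb.2 ha.1
  have hapos : 0 < a := lt_of_lt_of_le hbpos hba
  have hbe : ∀ i, b ≤ hZ.1.eigenvalues i := fun i => hb.2 ⟨i, rfl⟩
  have hae : ∀ i, hZ.1.eigenvalues i ≤ a := fun i => ha.2 ⟨i, rfl⟩
  set e : Fin n → ℝ := hZ.1.eigenvalues with he
  have hepos : ∀ i, 0 < e i := fun i => lt_of_lt_of_le hbpos (hbe i)
  set κ := Real.sqrt (a * b) with hκ
  have hκpos : 0 < κ := Real.sqrt_pos.mpr (by positivity)
  have hκsq : κ ^ 2 = a * b := Real.sq_sqrt (by positivity)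
  set K := (a + b) / (2 * κ) with hKdef
  have hKpos : 0 < K := by positivity
  set Uz := hZ.1.eigenvectorUnitary with hUz
  have hZe : Z = cdiag Uz e := by
    have h := hZ.1.spectral_theorem
    rw [h]; rfl
  set S := cdiag Uz (fun i => Real.sqrt (e i)) with hS
  set T := cdiag Uz (fun i => (Real.sqrt (e i))⁻¹) with hT
  set Y := cdiag Uz (fun i => (e i)⁻¹) with hYdef
  have hSherm : S.IsHermitian := cdiag_herm Uz _
  have hTherm : T.IsHermitian := cdiag_herm Uz _
  have hTS : T * S = 1 := by
    rw [hT, hS, cdiag_mul,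
      show ((fun i => (Real.sqrt (e i))⁻¹) * fun i => Real.sqrt (e i)) = 1 from
        funext fun i => by
          simp [Pi.mul_apply, inv_mul_cancel₀ (ne_of_gt (Real.sqrt_pos.mpr (hepos i)))],
      cdiag_one]
  have hSS : S * S = Z := by
    rw [hS, cdiag_mul,
      show ((fun i => Real.sqrt (e i)) * fun i => Real.sqrt (e i)) = e from
        funext fun i => Real.mul_self_sqrt (hepos i).le, ← hZe]
  have hTT : T * T = Y := by
    rw [hT, hYdef, cdiag_mul,
      show ((fun i => (Real.sqrt (e i))⁻¹) * fun i => (Real.sqrt (e i))⁻¹)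
          = fun i => (e i)⁻¹ from
        funext fun i => by rw [Pi.mul_apply, ← mul_inv, Real.mul_self_sqrt (hepos i).le]]
  have hSYS : S * Y * S = 1 := by
    rw [hS, hYdef, cdiag_mul, cdiag_mul,
      show (((fun i => Real.sqrt (e i)) * fun i => (e i)⁻¹) * fun i => Real.sqrt (e i)) = 1 from
        funext fun i => by
          show Real.sqrt (e i) * (e i)⁻¹ * Real.sqrt (e i) = 1
          rw [mul_comm (Real.sqrt (e i)) ((e i)⁻¹), mul_assoc,
            Real.mul_self_sqrt (hepos i).le, inv_mul_cancel₀ (ne_of_gt (hepos i))],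
      cdiag_one]
  set B := S * A * S with hB
  have hBpsd : B.PosSemidef := by
    have h := hA.conjTranspose_mul_mul_same S
    rw [show Sᴴ = S from hSherm] at h
    exact h
  set Vb := hBpsd.1.eigenvectorUnitary with hVb
  set βg := hBpsd.1.eigenvalues with hβg
  have hBspec : B = cdiag Vb βg := by
    have h := hBpsd.1.spectral_theorem
    rw [h]; rfl
  have hAZ : A * Z = T * B * S := by
    rw [hB]
    calc A * Z = 1 * A * (S * S) := by rw [one_mul, hSS]
      _ = (T * S) * A * (S * S) := by rw [hTS]
      _ = T * (S * A * S) * S := by simp only [mul_assoc]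
  set G := (A * Z)ᴴ * (A * Z) with hG
  have hGpsd : G.PosSemidef := Matrix.posSemidef_conjTranspose_mul_self (A * Z)
  set Wg := hGpsd.1.eigenvectorUnitary with hWg
  set γ := hGpsd.1.eigenvalues with hγ
  have hGspec : G = cdiag Wg γ := by
    have h := hGpsd.1.spectral_theorem
    rw [h]; rfl
  -- permutations
  have hup : ∀ f g : Fin n → ℝ,
      Multiset.map (fun i => ((f i : ℝ) : ℂ)) Finset.univ.val =
        Multiset.map (fun i => ((g i : ℝ) : ℂ)) Finset.univ.val →
      ∃ σ : Equiv.Perm (Fin n), f = g ∘ σ := by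
    intro f g hfg
    apply my_exists_perm
    apply Multiset.map_injective Complex.ofReal_injective
    rw [Multiset.map_map, Multiset.map_map]
    exact hfg
  obtain ⟨π, hπ⟩ : ∃ σ : Equiv.Perm (Fin n), lam = βg ∘ σ := by
    apply hup
    have h2 : (A * Z).charpoly = B.charpoly := by
      rw [hAZ]; exact my_charpoly_conj B T S hTS
    rw [show (fun i => ((lam i : ℝ) : ℂ)) = fun i => ((lam i : ℂ)) from rfl, hlam, h2,
      my_herm_roots hBpsd.1]
  set μsq := fun i => μ i ^ 2 with hμsq
  obtain ⟨ρ, hρ⟩ : ∃ σ : Equiv.Perm (Fin n), μsq = γ ∘ σ := by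
    apply hup
    have h1 : Multiset.map (fun i => ((μsq i : ℝ) : ℂ)) Finset.univ.val =
        Multiset.map (fun i => ((μ i : ℂ)) ^ 2) Finset.univ.val :=
      Multiset.map_congr rfl (fun i _ => by rw [hμsq]; push_cast; ring)
    rw [h1, hμ, my_herm_roots hGpsd.1]
  have hlamnn : ∀ i, 0 ≤ lam i := fun i => by
    rw [hπ]; exact hBpsd.eigenvalues_nonneg (π i)
  have hβnn : ∀ p, 0 ≤ βg p := hBpsd.eigenvalues_nonneg
  have hβπ : ∀ i, βg (π i) = lam i := fun i => by rw [hπ]; rfl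
  have hγρ : ∀ i, γ (ρ i) = μsq i := fun i => by rw [hρ]; rfl
  -- KL instantiation
  have hKeq : K = (b⁻¹ + a⁻¹) / (2 * Real.sqrt (b⁻¹ * a⁻¹)) := by
    rw [hKdef]
    have h1 : b⁻¹ * a⁻¹ = (a * b)⁻¹ := by ring
    rw [h1, Real.sqrt_inv, ← hκ]
    rw [div_eq_div_iff (by positivity) (by positivity)]
    field_simp
    ring_nf
    rw [hκsq]
  have hyb : ∀ i, a⁻¹ ≤ (e i)⁻¹ ∧ (e i)⁻¹ ≤ b⁻¹ := fun i =>
    ⟨inv_anti₀ (hepos i) (hae i), inv_anti₀ hbpos (hbe i)⟩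
  have KLapp : ∀ C : Matrix (Fin n) (Fin n) ℂ, C.IsHermitian → (C - C * C).PosSemidef →
      ((K ^ 2 : ℝ) • Y - C * Y * C).PosSemidef := by
    intro C h1 h2
    rw [hYdef]
    exact my_KL Uz _ (inv_pos.mpr hapos) hyb hKeq C h1 h2
  -- common quadratic form identity
  have hGquad : ∀ x : Fin n → ℂ, star x ⬝ᵥ (G *ᵥ x)
      = star (B *ᵥ (S *ᵥ x)) ⬝ᵥ (Y *ᵥ (B *ᵥ (S *ᵥ x))) := by
    intro x
    have h1 : star x ⬝ᵥ (G *ᵥ x) = star ((A * Z) *ᵥ x) ⬝ᵥ ((A * Z) *ᵥ x) :=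
      (dot_mulVec_mulVec (A * Z) x x).symm
    have h2 : (A * Z) *ᵥ x = T *ᵥ (B *ᵥ (S *ᵥ x)) := by
      rw [hAZ, ← Matrix.mulVec_mulVec, ← Matrix.mulVec_mulVec]
    rw [h1, h2, dot_mulVec_mulVec, show Tᴴ = T from hTherm, hTT]
  -- constraint functionals
  set φc : Fin n → ((Fin n → ℂ) →ₗ[ℂ] ℂ) := fun j =>
    (LinearMap.proj (π j)) ∘ₗ
      (Matrix.mulVecLin ((star Vb : Matrix (Fin n) (Fin n) ℂ) * S * (Wg : Matrix (Fin n) (Fin n) ℂ)))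
    with hφc
  have hφceq : ∀ (c : Fin n → ℂ) (j : Fin n),
      φc j c = ((star Vb : Matrix (Fin n) (Fin n) ℂ) *ᵥ
        (S *ᵥ ((Wg : Matrix (Fin n) (Fin n) ℂ) *ᵥ c))) (π j) := by
    intro c j
    rw [hφc]
    simp only [LinearMap.coe_comp, Function.comp_apply, Matrix.mulVecLin_apply,
      LinearMap.proj_apply, ← Matrix.mulVec_mulVec]
  -- PART 1: upper bound  μ k ≤ K * lam k
  have hcard1 : (Finset.Iio k).card < ((Finset.Iic k).image ρ).card := by
    rw [Finset.card_image_of_injective _ ρ.injective]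
    refine Finset.card_lt_card ⟨fun x hx => Finset.mem_Iic.mpr (le_of_lt (Finset.mem_Iio.mp hx)),
      fun hsub => ?_⟩
    have := hsub (Finset.mem_Iic.mpr (le_refl k))
    simp at this
  obtain ⟨c, hc0, hcs, hcc⟩ := exists_coeffs ((Finset.Iic k).image ρ) (Finset.Iio k) hcard1 φc
  set x := (Wg : Matrix (Fin n) (Fin n) ℂ) *ᵥ c with hx
  set y := S *ᵥ x with hy
  set Sle := ∑ p, Complex.normSq (c p) with hSledef
  have hSlepos : 0 < Sle := by
    obtain ⟨q, hq⟩ := Function.ne_iff.mp hc0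
    exact Finset.sum_pos' (fun p _ => Complex.normSq_nonneg _)
      ⟨q, Finset.mem_univ q, Complex.normSq_pos.mpr hq⟩
  have hycoord : ∀ j, j < k → ((star Vb : Matrix (Fin n) (Fin n) ℂ) *ᵥ y) (π j) = 0 := by
    intro j hj
    have h := hcc j (Finset.mem_Iio.mpr hj)
    rw [hφceq] at h
    exact h
  set ψ : Fin n → ℝ := fun p => if k ≤ π.symm p then βg p else 0 with hψ
  have hBy : B *ᵥ y = (cdiag Vb ψ) *ᵥ y := by
    have hdz : (cdiag Vb (βg - ψ)) *ᵥ y = ((0 : ℝ) : ℂ) • y := by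
      apply cdiag_mulVec_eq_smul
      intro p hp
      by_cases hk : k ≤ π.symm p
      · show βg p - ψ p = 0
        rw [hψ]
        simp [hk]
      · exfalso
        apply hp
        have h0 := hycoord (π.symm p) (lt_of_not_ge hk)
        rwa [Equiv.apply_symm_apply] at h0
    have hsub : B *ᵥ y - cdiag Vb ψ *ᵥ y = 0 := by
      rw [← Matrix.sub_mulVec, hBspec, cdiag_sub, hdz]
      simp
    exact sub_eq_zero.mp hsub
  have hq1 : ((μ k ^ 2 * Sle : ℝ) : ℂ) ≤ star x ⬝ᵥ (G *ᵥ x) := by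
    have hxg : star x ⬝ᵥ (G *ᵥ x) = ((∑ p, γ p * Complex.normSq (c p) : ℝ) : ℂ) := by
      rw [hx, hGspec]
      exact quad_cdiag Wg γ c
    rw [hxg, Complex.real_le_real]
    rw [hSledef, Finset.mul_sum]
    apply Finset.sum_le_sum
    intro p _
    by_cases hp : c p = 0
    · simp [hp]
    · have hmem : p ∈ (Finset.Iic k).image ρ := by
        by_contra hmem
        exact hp (hcs p hmem)
      obtain ⟨i, hi, rfl⟩ := Finset.mem_image.mp hmem
      have hle : μ k ^ 2 ≤ γ (ρ i) := by
        rw [hγρ i]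
        exact pow_le_pow_left₀ (hμnn k) (hμmono (Finset.mem_Iic.mp hi)) 2
      exact mul_le_mul_of_nonneg_right hle (Complex.normSq_nonneg _)
  have hyYy : star y ⬝ᵥ (Y *ᵥ y) = ((Sle : ℝ) : ℂ) := by
    rw [hy, quad_conj hSherm, hSYS, Matrix.one_mulVec, hx, dot_unitary_self]
  by_cases hlk : lam k = 0
  · -- degenerate case
    have hψ0 : ψ = fun _ => (0 : ℝ) := by
      funext p
      rw [hψ]
      by_cases hk : k ≤ π.symm p
      · simp only [if_pos hk]
        have h1 : βg p = lam (π.symm p) := by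
          rw [← hβπ (π.symm p), Equiv.apply_symm_apply]
        have h2 : lam (π.symm p) ≤ lam k := hlmono hk
        have h3 := hlamnn (π.symm p)
        rw [h1]
        linarith [hlk ▸ h2]
      · simp [hk]
    have hBy0 : B *ᵥ y = 0 := by
      rw [hBy]
      have h4 : (cdiag Vb ψ) *ᵥ y = ((0 : ℝ) : ℂ) • y := by
        apply cdiag_mulVec_eq_smul
        intro p _
        rw [hψ0]
      rw [h4]
      simp
    have hG0 : star x ⬝ᵥ (G *ᵥ x) = 0 := by
      rw [hGquad x, ← hy, hBy0]
      simp
    have hμk0 : μ k = 0 := by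
      have h5 := hq1
      rw [hG0] at h5
      have hr : μ k ^ 2 * Sle ≤ 0 := by exact_mod_cast h5
      have h9 : μ k ^ 2 ≤ 0 := by
        have h10 : μ k ^ 2 * Sle ≤ 0 * Sle := by linarith
        exact le_of_mul_le_mul_right h10 hSlepos
      have h11 : μ k ≤ 0 := by nlinarith [hμnn k]
      exact le_antisymm h11 (hμnn k)
    constructor
    · rw [hlk, hμk0]; simp
    · rw [hlk, hμk0]; simp
  · have hlkpos : 0 < lam k := lt_of_le_of_ne (hlamnn k) (Ne.symm hlk)
    set C₂ := cdiag Vb (fun p => ψ p / lam k) with hC₂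
    have hψval : ∀ p, 0 ≤ ψ p / lam k ∧ ψ p / lam k ≤ 1 := by
      intro p
      rw [hψ]
      by_cases hk : k ≤ π.symm p
      · simp only [if_pos hk]
        have h1 : βg p = lam (π.symm p) := by
          rw [← hβπ (π.symm p), Equiv.apply_symm_apply]
        refine ⟨div_nonneg (hβnn p) hlkpos.le, ?_⟩
        rw [div_le_one hlkpos, h1]
        exact hlmono hk
      · simp [hk, hlkpos.le]
    have hC₂herm : C₂.IsHermitian := cdiag_herm Vb _
    have hC₂2 : (C₂ - C₂ * C₂).PosSemidef := by
      rw [hC₂, cdiag_mul, cdiag_sub]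
      apply cdiag_psd
      intro p
      obtain ⟨h0, h1⟩ := hψval p
      show 0 ≤ ψ p / lam k - ψ p / lam k * (ψ p / lam k)
      nlinarith
    have hB₂C₂ : cdiag Vb ψ = (lam k : ℝ) • C₂ := by
      rw [hC₂, cdiag_smul]
      have hfe : (lam k • fun p => ψ p / lam k) = ψ := by
        funext p
        show lam k * (ψ p / lam k) = ψ p
        field_simp
      rw [hfe]
    have hchain : star x ⬝ᵥ (G *ᵥ x) ≤ ((K ^ 2 * lam k ^ 2 * Sle : ℝ) : ℂ) := by
      have h1 : star x ⬝ᵥ (G *ᵥ x)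
          = ((lam k ^ 2 : ℝ) : ℂ) * (star (C₂ *ᵥ y) ⬝ᵥ (Y *ᵥ (C₂ *ᵥ y))) := by
        rw [hGquad x, ← hy, hBy, hB₂C₂, Matrix.smul_mulVec,
          show ((lam k : ℝ) • (C₂ *ᵥ y)) = ((lam k : ℂ) • (C₂ *ᵥ y)) from
            funext fun p => by simp [Complex.real_smul],
          quad_smul_vec]
      have h2 : star (C₂ *ᵥ y) ⬝ᵥ (Y *ᵥ (C₂ *ᵥ y)) = star y ⬝ᵥ ((C₂ * Y * C₂) *ᵥ y) :=
        quad_conj hC₂herm y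
      have h3 : star y ⬝ᵥ ((C₂ * Y * C₂) *ᵥ y) ≤ ((K ^ 2 : ℝ) : ℂ) * ((Sle : ℝ) : ℂ) := by
        have h4 := psd_le (KLapp C₂ hC₂herm hC₂2) y
        rw [quad_smul, hyYy] at h4
        exact h4
      rw [h1, h2]
      calc ((lam k ^ 2 : ℝ) : ℂ) * (star y ⬝ᵥ ((C₂ * Y * C₂) *ᵥ y))
          ≤ ((lam k ^ 2 : ℝ) : ℂ) * (((K ^ 2 : ℝ) : ℂ) * ((Sle : ℝ) : ℂ)) := by
            apply mul_le_mul_of_nonneg_left h3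
            exact Complex.zero_le_real.mpr (by positivity)
        _ = ((K ^ 2 * lam k ^ 2 * Sle : ℝ) : ℂ) := by push_cast; ring
    have hfinal : μ k ^ 2 * Sle ≤ K ^ 2 * lam k ^ 2 * Sle := by
      have h5 := le_trans hq1 hchain
      exact_mod_cast h5
    have hD1 : μ k ≤ K * lam k := by
      have h5 : μ k ^ 2 ≤ (K * lam k) ^ 2 := by
        have h6 : μ k ^ 2 * Sle ≤ (K * lam k) ^ 2 * Sle := by nlinarith [hfinal]
        exact le_of_mul_le_mul_right h6 hSlepos
      have h7 := Real.sqrt_le_sqrt h5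
      rwa [Real.sqrt_sq (hμnn k), Real.sqrt_sq (mul_nonneg hKpos.le (hlamnn k))] at h7
    -- PART 2: lower bound  lam k ≤ K * μ k
    have hcard2 : (Finset.Ioi k).card < ((Finset.Ici k).image ρ).card := by
      rw [Finset.card_image_of_injective _ ρ.injective]
      refine Finset.card_lt_card ⟨fun x hx => Finset.mem_Ici.mpr (le_of_lt (Finset.mem_Ioi.mp hx)),
        fun hsub => ?_⟩
      have := hsub (Finset.mem_Ici.mpr (le_refl k))
      simp at this
    obtain ⟨c', hc0', hcs', hcc'⟩ := exists_coeffs ((Finset.Ici k).image ρ) (Finset.Ioi k) hcard2 φc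
    set x' := (Wg : Matrix (Fin n) (Fin n) ℂ) *ᵥ c' with hx'
    set y' := S *ᵥ x' with hy'
    set Sge := ∑ p, Complex.normSq (c' p) with hSgedef
    have hSgepos : 0 < Sge := by
      obtain ⟨q, hq⟩ := Function.ne_iff.mp hc0'
      exact Finset.sum_pos' (fun p _ => Complex.normSq_nonneg _)
        ⟨q, Finset.mem_univ q, Complex.normSq_pos.mpr hq⟩
    have hycoord' : ∀ j, k < j → ((star Vb : Matrix (Fin n) (Fin n) ℂ) *ᵥ y') (π j) = 0 := by
      intro j hj
      have h := hcc' j (Finset.mem_Ioi.mpr hj)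
      rw [hφceq] at h
      exact h
    set u := B *ᵥ y' with hu
    set cf : Fin n → ℝ := fun p => if π.symm p ≤ k then lam k / βg p else 0 with hcf
    have hβpos' : ∀ p, π.symm p ≤ k → 0 < βg p := by
      intro p hp
      have h1 : βg p = lam (π.symm p) := by
        rw [← hβπ (π.symm p), Equiv.apply_symm_apply]
      rw [h1]
      exact lt_of_lt_of_le hlkpos (hlmono hp)
    set C' := cdiag Vb cf with hC'
    have hC'herm : C'.IsHermitian := cdiag_herm Vb _
    have hcfval : ∀ p, 0 ≤ cf p ∧ cf p ≤ 1 := by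
      intro p
      rw [hcf]
      by_cases hp : π.symm p ≤ k
      · simp only [if_pos hp]
        have h2 := hβpos' p hp
        refine ⟨div_nonneg hlkpos.le h2.le, ?_⟩
        rw [div_le_one h2]
        have h1 : βg p = lam (π.symm p) := by
          rw [← hβπ (π.symm p), Equiv.apply_symm_apply]
        rw [h1]
        exact hlmono hp
      · simp [hp]
    have hC'2 : (C' - C' * C').PosSemidef := by
      rw [hC', cdiag_mul, cdiag_sub]
      apply cdiag_psd
      intro p
      obtain ⟨h0, h1⟩ := hcfval p
      show 0 ≤ cf p - cf p * cf p
      nlinarith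
    have hC'u : C' *ᵥ u = (lam k : ℂ) • y' := by
      rw [hu, Matrix.mulVec_mulVec, hC', hBspec, cdiag_mul]
      apply cdiag_mulVec_eq_smul
      intro p hp
      by_cases hple : π.symm p ≤ k
      · show cf p * βg p = lam k
        rw [hcf]
        simp only [if_pos hple]
        exact div_mul_cancel₀ _ (ne_of_gt (hβpos' p hple))
      · exfalso
        apply hp
        have h0 := hycoord' (π.symm p) (lt_of_not_ge hple)
        rwa [Equiv.apply_symm_apply] at h0
    have hr4 : star u ⬝ᵥ (Y *ᵥ u) = star x' ⬝ᵥ (G *ᵥ x') := by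
      rw [hGquad x', ← hy', ← hu]
    have hy'Yy' : star y' ⬝ᵥ (Y *ᵥ y') = ((Sge : ℝ) : ℂ) := by
      rw [hy', quad_conj hSherm, hSYS, Matrix.one_mulVec, hx', dot_unitary_self]
    have hr2 : star u ⬝ᵥ ((C' * Y * C') *ᵥ u) = ((lam k ^ 2 * Sge : ℝ) : ℂ) := by
      rw [← quad_conj hC'herm u, hC'u, quad_smul_vec, hy'Yy']
      push_cast
      ring
    have hr3 : star u ⬝ᵥ ((C' * Y * C') *ᵥ u) ≤ ((K ^ 2 : ℝ) : ℂ) * (star u ⬝ᵥ (Y *ᵥ u)) := by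
      have h4 := psd_le (KLapp C' hC'herm hC'2) u
      rwa [quad_smul] at h4
    have hr1 : star x' ⬝ᵥ (G *ᵥ x') ≤ ((μ k ^ 2 * Sge : ℝ) : ℂ) := by
      have hxg : star x' ⬝ᵥ (G *ᵥ x') = ((∑ p, γ p * Complex.normSq (c' p) : ℝ) : ℂ) := by
        rw [hx', hGspec]
        exact quad_cdiag Wg γ c'
      rw [hxg, Complex.real_le_real, hSgedef, Finset.mul_sum]
      apply Finset.sum_le_sum
      intro p _
      by_cases hp : c' p = 0
      · simp [hp]
      · have hmem : p ∈ (Finset.Ici k).image ρ := by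
          by_contra hmem
          exact hp (hcs' p hmem)
        obtain ⟨i, hi, rfl⟩ := Finset.mem_image.mp hmem
        have hle : γ (ρ i) ≤ μ k ^ 2 := by
          rw [hγρ i]
          exact pow_le_pow_left₀ (hμnn i) (hμmono (Finset.mem_Ici.mp hi)) 2
        exact mul_le_mul_of_nonneg_right hle (Complex.normSq_nonneg _)
    have hcplx : ((lam k ^ 2 * Sge : ℝ) : ℂ) ≤ ((K ^ 2 * (μ k ^ 2 * Sge) : ℝ) : ℂ) := by
      rw [← hr2]
      calc star u ⬝ᵥ ((C' * Y * C') *ᵥ u)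
          ≤ ((K ^ 2 : ℝ) : ℂ) * (star u ⬝ᵥ (Y *ᵥ u)) := hr3
        _ = ((K ^ 2 : ℝ) : ℂ) * (star x' ⬝ᵥ (G *ᵥ x')) := by rw [hr4]
        _ ≤ ((K ^ 2 : ℝ) : ℂ) * ((μ k ^ 2 * Sge : ℝ) : ℂ) := by
            apply mul_le_mul_of_nonneg_left hr1
            exact Complex.zero_le_real.mpr (by positivity)
        _ = ((K ^ 2 * (μ k ^ 2 * Sge) : ℝ) : ℂ) := by push_cast; ring
    have hfin2 : lam k ^ 2 * Sge ≤ K ^ 2 * (μ k ^ 2 * Sge) := by exact_mod_cast hcplx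
    have hD2 : lam k ≤ K * μ k := by
      have h5 : lam k ^ 2 ≤ (K * μ k) ^ 2 := by
        have h6 : lam k ^ 2 * Sge ≤ (K * μ k) ^ 2 * Sge := by nlinarith [hfin2]
        exact le_of_mul_le_mul_right h6 hSgepos
      have h7 := Real.sqrt_le_sqrt h5
      rwa [Real.sqrt_sq (hlamnn k), Real.sqrt_sq (mul_nonneg hKpos.le (hμnn k))] at h7
    constructor
    · have h7 : 2 * κ / (a + b) * K = 1 := by
        rw [hKdef]
        field_simp
      have h8 : 0 ≤ 2 * κ / (a + b) := by positivity
      calc 2 * κ / (a + b) * lam k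
          ≤ 2 * κ / (a + b) * (K * μ k) := mul_le_mul_of_nonneg_left hD2 h8
        _ = (2 * κ / (a + b) * K) * μ k := by ring
        _ = μ k := by rw [h7, one_mul]
    · exact hD1
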